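/- Let F, G, H, F̃, G̃, H̃, K̃ : ℝ → ℂ be differentiable functions satisfying, for all t ∈ ℝ: F' = −2iG F̃ + i(G̃ + K̃)F, G' = i(F H̃ − H F̃), H' = 2iG H̃ − i(G̃ + K̃)H. Then: (i) the function G² − FH is constant on ℝ; (ii) if moreover F(t) ≠ 0 for all t in an open interval I ⊆ ℝ and w ∈ ℂ satisfies w² = G(t₀)² − F(t₀)H(t₀) for some t₀ ∈ ℝ, then the function φ := (w + G)/F satisfies the Riccati-type differential equation φ' = i F̃ φ² − i(G̃ + K̃)φ + i H̃ on I. -/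

import Mathlib

/-- Given the time-dependent zero-curvature identities
`F' = −2iG F̃ + i(G̃ + K̃)F`, `G' = i(F H̃ − H F̃)`, `H' = 2iG H̃ − i(G̃ + K̃)H`:
(i) `G² − FH` is constant in `t`; (ii) if `F` does not vanish on an open interval
`(a,b)` and `w² = G(t₀)² − F(t₀)H(t₀)` for some `t₀`, then `φ = (w + G)/F` satisfies
the Riccati-type equation `φ' = iF̃φ² − i(G̃ + K̃)φ + iH̃` on `(a,b)`. -/
theorem time_dependent_FGH (F G H Ft Gt Ht Kt : ℝ → ℂ)
    (hFt : Differentiable ℝ Ft) (hGt : Differentiable ℝ Gt)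
    (hHt : Differentiable ℝ Ht) (hKt : Differentiable ℝ Kt)
    (hF : ∀ t : ℝ, HasDerivAt F
      (-2 * Complex.I * G t * Ft t + Complex.I * (Gt t + Kt t) * F t) t)
    (hG : ∀ t : ℝ, HasDerivAt G (Complex.I * (F t * Ht t - H t * Ft t)) t)
    (hH : ∀ t : ℝ, HasDerivAt H
      (2 * Complex.I * G t * Ht t - Complex.I * (Gt t + Kt t) * H t) t) :
    (∀ t s : ℝ, G t ^ 2 - F t * H t = G s ^ 2 - F s * H s)
    ∧ ∀ a b : ℝ, (∀ t ∈ Set.Ioo a b, F t ≠ 0) →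
        ∀ (w : ℂ) (t₀ : ℝ), w ^ 2 = G t₀ ^ 2 - F t₀ * H t₀ →
          ∀ t ∈ Set.Ioo a b,
            HasDerivAt (fun s => (w + G s) / F s)
              (Complex.I * Ft t * ((w + G t) / F t) ^ 2
                - Complex.I * (Gt t + Kt t) * ((w + G t) / F t)
                + Complex.I * Ht t) t := by
  have hQ : ∀ t : ℝ, HasDerivAt (fun s => G s ^ 2 - F s * H s) 0 t := by
    intro t
    have h := ((hG t).mul (hG t)).sub ((hF t).mul (hH t))
    have he : (fun s => G s ^ 2 - F s * H s) = fun s => G s * G s - F s * H s := by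
      funext s; ring
    rw [he]
    refine h.congr_deriv ?_
    ring
  have hconst : ∀ t s : ℝ, G t ^ 2 - F t * H t = G s ^ 2 - F s * H s := by
    intro t s
    exact is_const_of_deriv_eq_zero (fun x => (hQ x).differentiableAt)
      (fun x => (hQ x).deriv) t s
  refine ⟨hconst, ?_⟩
  intro a b hFne w t₀ hw t ht
  have hFt0 : F t ≠ 0 := hFne t ht
  have h := ((hG t).const_add w).div (hF t) hFt0
  refine h.congr_deriv ?_
  symm
  have hw' : w ^ 2 = G t ^ 2 - F t * H t := hw.trans (hconst t₀ t)
  field_simp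
  linear_combination (Ft t) * hw'
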